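/- The infinite sum over i ≥ 1 of 3^i · ((∑_{j=1}^i 1/j²) − 1/i²)/(i² · binom(2i, i)) equals 2π⁴/243. -/

import Mathlib

open Real Finset

namespace S17
noncomputable section

def H2 (n : ℕ) : ℝ := ∑ j ∈ Finset.range n, 1/((j:ℝ)+1)^2
def cb (n : ℕ) : ℝ := ((2*n).choose n : ℝ)
def b (n : ℕ) : ℝ := 4^n/(2*(n:ℝ)^2 * cb n)
def a (n : ℕ) : ℝ := 3*4^n * H2 (n-1)/(2*(n:ℝ)^2 * cb n)

lemma cb_pos (n : ℕ) : 0 < cb n := by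
  unfold cb
  exact_mod_cast Nat.choose_pos (by omega)

lemma cb_succ (n : ℕ) : ((n:ℝ)+1) * cb (n+1) = 2*(2*(n:ℝ)+1) * cb n := by
  have h := Nat.succ_mul_centralBinom_succ n
  simp only [Nat.centralBinom_eq_two_mul_choose] at h
  have h2 : ((n+1) * ((2*(n+1)).choose (n+1)) : ℝ) = ((2 * (2*n+1) * ((2*n).choose n)) : ℕ) := by
    exact_mod_cast congrArg (fun k : ℕ => (k : ℝ)) h
  push_cast at h2
  unfold cb
  push_cast
  linarith

lemma H2_succ (n : ℕ) : H2 (n+1) = H2 n + 1/((n:ℝ)+1)^2 := by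
  simp [H2, Finset.sum_range_succ]

lemma H2_nonneg (n : ℕ) : 0 ≤ H2 n := by
  apply Finset.sum_nonneg; intro j _; positivity

lemma H2_le' (n : ℕ) : H2 n ≤ 2 - 2/((n:ℝ)+1) := by
  induction n with
  | zero => simp [H2]
  | succ n ih =>
    rw [H2_succ]
    have h1 : (0:ℝ) < (n:ℝ)+1 := by positivity
    have h2 : (0:ℝ) < (n:ℝ)+2 := by positivity
    have key : 1/((n:ℝ)+1)^2 ≤ 2/((n:ℝ)+1) - 2/((n:ℝ)+2) := by
      rw [div_sub_div _ _ (ne_of_gt h1) (ne_of_gt h2), div_le_div_iff₀ (by positivity) (by positivity)]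
      nlinarith
    push_cast
    rw [show ((n:ℝ)+1+1) = (n:ℝ)+2 from by ring]
    linarith

lemma H2_le_two (n : ℕ) : H2 n ≤ 2 := by
  have h : (0:ℝ) < 2/((n:ℝ)+1) := by positivity
  linarith [H2_le' n]

lemma four_pow_le (n : ℕ) (hn : 1 ≤ n) : (4:ℝ)^n ≤ 2*(n:ℝ)*cb n := by
  have h := (Nat.cast_le (α := ℝ)).2 (Nat.four_pow_le_two_mul_self_mul_centralBinom n hn)
  rw [Nat.centralBinom_eq_two_mul_choose] at h
  push_cast at h
  unfold cb
  linarith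

lemma b_nonneg (n : ℕ) : 0 ≤ b n := by
  unfold b
  have := cb_pos n
  positivity

lemma a_nonneg (n : ℕ) : 0 ≤ a n := by
  unfold a
  have := H2_nonneg (n-1)
  have := cb_pos n
  positivity

lemma b_le (n : ℕ) : |b n| ≤ 6 := by
  rw [abs_of_nonneg (b_nonneg n)]
  rcases Nat.eq_zero_or_pos n with h | h
  · subst h; simp [b]
  · have h4 := four_pow_le n h
    have hcb := cb_pos n
    have hn : (1:ℝ) ≤ (n:ℝ) := by exact_mod_cast h
    have hn2 : (n:ℝ) ≤ (n:ℝ)^2 := by nlinarith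
    unfold b
    rw [div_le_iff₀ (by positivity)]
    nlinarith
lemma a_le (n : ℕ) : |a n| ≤ 6 := by
  rw [abs_of_nonneg (a_nonneg n)]
  rcases Nat.eq_zero_or_pos n with h | h
  · subst h; simp [a]
  · have h4 := four_pow_le n h
    have hcb := cb_pos n
    have hn : (1:ℝ) ≤ (n:ℝ) := by exact_mod_cast h
    have hn2 : (n:ℝ) ≤ (n:ℝ)^2 := by nlinarith
    have hH := H2_le_two (n-1)
    have hH0 := H2_nonneg (n-1)
    have h40 : (0:ℝ) < 4^n := by positivity
    unfold a
    rw [div_le_iff₀ (by positivity)]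
    nlinarith [mul_le_mul_of_nonneg_left hH (le_of_lt h40)]


lemma b_rec (n : ℕ) : (2*(n:ℝ)+2)*(2*(n:ℝ)+1) * b (n+1) = (2*(n:ℝ))^2 * b n + (if n = 0 then 2 else 0) := by
  rcases n with _ | m
  · norm_num [b, cb]
  · simp only [if_neg (Nat.succ_ne_zero m)]
    have hc := cb_succ (m+1)
    have hcb := cb_pos (m+1)
    have hcb2 := cb_pos (m+2)
    have hc' : cb (m+1+1) = 2*(2*((m:ℝ)+1)+1) * cb (m+1) / ((m:ℝ)+2) := by
      rw [eq_div_iff (by positivity)]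
      push_cast at hc ⊢
      linarith
    unfold b
    rw [hc']
    push_cast
    field_simp
    ring

lemma a_rec (n : ℕ) : (2*(n:ℝ)+2)*(2*(n:ℝ)+1) * a (n+1) = (2*(n:ℝ))^2 * a n + 12 * b n := by
  rcases n with _ | m
  · norm_num [a, b, cb, H2]
  · have hc := cb_succ (m+1)
    have hcb := cb_pos (m+1)
    have hcb2 := cb_pos (m+2)
    have hc' : cb (m+1+1) = 2*(2*((m:ℝ)+1)+1) * cb (m+1) / ((m:ℝ)+2) := by
      rw [eq_div_iff (by positivity)]
      push_cast at hc ⊢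
      linarith
    have hH : H2 (m+1) = H2 m + 1/((m:ℝ)+1)^2 := H2_succ m
    unfold a b
    simp only [Nat.add_sub_cancel]
    rw [hc', hH]
    push_cast
    field_simp
    ring

def t0 (c : ℕ → ℝ) (n : ℕ) (x : ℝ) : ℝ := c n * x^(2*n)
def t1 (c : ℕ → ℝ) (n : ℕ) (x : ℝ) : ℝ := c n * (((2*n : ℕ) : ℝ) * x^(2*n-1))
def t2 (c : ℕ → ℝ) (n : ℕ) (x : ℝ) : ℝ :=
  c n * (((2*n : ℕ) : ℝ) * (((2*n-1 : ℕ) : ℝ) * x^(2*n-1-1)))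

variable {c : ℕ → ℝ}

lemma hasDerivAt_t0 (n : ℕ) (x : ℝ) : HasDerivAt (fun y => t0 c n y) (t1 c n x) x :=
  (hasDerivAt_pow (2*n) x).const_mul (c n)

lemma hasDerivAt_t1 (n : ℕ) (x : ℝ) : HasDerivAt (fun y => t1 c n y) (t2 c n x) x := by
  exact ((hasDerivAt_pow (2*n-1) x).const_mul (((2*n : ℕ) : ℝ))).const_mul (c n)

lemma geo_lt : ‖(81/100 : ℝ)‖ < 1 := by rw [Real.norm_eq_abs, abs_of_pos] <;> norm_num

lemma summable_u1 : Summable (fun n : ℕ => (40/3) * ((n:ℝ) * (81/100)^n)) := by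
  apply Summable.mul_left
  simpa using summable_pow_mul_geometric_of_norm_lt_one 1 geo_lt

lemma summable_u2 : Summable (fun n : ℕ => 30 * ((n:ℝ)^2 * (81/100)^n)) := by
  apply Summable.mul_left
  simpa using summable_pow_mul_geometric_of_norm_lt_one 2 geo_lt

lemma pow_bound {x : ℝ} (hx : |x| ≤ 9/10) (k : ℕ) : |x|^k ≤ (9/10)^k :=
  pow_le_pow_left₀ (abs_nonneg x) hx k

lemma norm_t0_le (hc : ∀ n, |c n| ≤ 6) {x : ℝ} (hx : |x| ≤ 9/10) (n : ℕ) :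
    ‖t0 c n x‖ ≤ 6 * (81/100)^n := by
  rw [Real.norm_eq_abs, t0, abs_mul, abs_pow]
  have h1 := pow_bound hx (2*n)
  have h2 : ((9:ℝ)/10)^(2*n) = (81/100)^n := by
    rw [pow_mul]; norm_num
  have h3 : (0:ℝ) ≤ (81/100)^n := by positivity
  calc |c n| * |x|^(2*n) ≤ 6 * (81/100)^n := by
        apply mul_le_mul (hc n) (h2 ▸ h1) (by positivity) (by norm_num)

lemma norm_t1_le (hc : ∀ n, |c n| ≤ 6) {x : ℝ} (hx : |x| ≤ 9/10) (n : ℕ) :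
    ‖t1 c n x‖ ≤ (40/3) * ((n:ℝ) * (81/100)^n) := by
  rcases n with _ | m
  · simp [t1]
  · have e : 2*(m+1)-1 = 2*m+1 := by omega
    rw [Real.norm_eq_abs, t1, abs_mul, abs_mul, abs_pow, e, Nat.abs_cast]
    have hxp : |x|^(2*m+1) ≤ (9/10:ℝ)^(2*m+1) := pow_bound hx _
    have e2 : ((9:ℝ)/10)^(2*m+1) = (10/9) * (81/100)^(m+1) := by
      rw [pow_succ, pow_mul, pow_succ]; norm_num; ring
    have step : |c (m+1)| * (((2*(m+1) : ℕ):ℝ) * |x|^(2*m+1))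
        ≤ 6 * (((2*(m+1) : ℕ):ℝ) * ((10/9) * (81/100)^(m+1))) := by
      gcongr
      · exact hc _
      · rw [← e2]; exact hxp
    refine step.trans (le_of_eq ?_)
    push_cast
    ring

lemma norm_t2_le (hc : ∀ n, |c n| ≤ 6) {x : ℝ} (hx : |x| ≤ 9/10) (n : ℕ) :
    ‖t2 c n x‖ ≤ 30 * ((n:ℝ)^2 * (81/100)^n) := by
  rcases n with _ | m
  · simp [t2]
  · have e : 2*(m+1)-1-1 = 2*m := by omega
    rw [Real.norm_eq_abs, t2, abs_mul, abs_mul, abs_mul, abs_pow, e, Nat.abs_cast, Nat.abs_cast]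
    have hxp : |x|^(2*m) ≤ (9/10:ℝ)^(2*m) := pow_bound hx _
    have e2 : ((9:ℝ)/10)^(2*m) = (100/81) * (81/100)^(m+1) := by
      rw [pow_mul, pow_succ]; norm_num; ring
    have step : |c (m+1)| * (((2*(m+1) : ℕ):ℝ) * (((2*(m+1)-1 : ℕ):ℝ) * |x|^(2*m)))
        ≤ 6 * (((2*(m+1) : ℕ):ℝ) * (((2*(m+1)-1 : ℕ):ℝ) * ((100/81) * (81/100)^(m+1)))) := by
      gcongr
      · exact hc _
      · rw [← e2]; exact hxp
    refine step.trans ?_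
    have e3 : ((2*(m+1)-1 : ℕ):ℝ) = 2*(m:ℝ)+1 := by
      rw [show 2*(m+1)-1 = 2*m+1 by omega]; push_cast; ring
    rw [e3]
    push_cast
    have hP : (0:ℝ) ≤ (81/100)^(m+1) := by positivity
    nlinarith [hP, sq_nonneg ((m:ℝ)+1), mul_nonneg (mul_nonneg (by norm_num : (0:ℝ) ≤ 6) hP) (Nat.cast_nonneg m), mul_nonneg hP (Nat.cast_nonneg m), mul_nonneg (mul_nonneg hP (Nat.cast_nonneg m)) (Nat.cast_nonneg m)]

lemma summable_t0 (hc : ∀ n, |c n| ≤ 6) {x : ℝ} (hx : |x| ≤ 9/10) :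
    Summable (fun n => t0 c n x) :=
  Summable.of_norm_bounded ((summable_geometric_of_lt_one (by norm_num) (by norm_num)).mul_left 6)
    (norm_t0_le hc hx)

lemma summable_t1 (hc : ∀ n, |c n| ≤ 6) {x : ℝ} (hx : |x| ≤ 9/10) :
    Summable (fun n => t1 c n x) :=
  Summable.of_norm_bounded summable_u1 (norm_t1_le hc hx)

lemma summable_t2 (hc : ∀ n, |c n| ≤ 6) {x : ℝ} (hx : |x| ≤ 9/10) :
    Summable (fun n => t2 c n x) :=
  Summable.of_norm_bounded summable_u2 (norm_t2_le hc hx)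

lemma mem_ball_abs {x : ℝ} (hx : x ∈ Metric.ball (0:ℝ) (9/10)) : |x| ≤ 9/10 := by
  rw [Metric.mem_ball, Real.dist_eq, sub_zero] at hx
  exact le_of_lt hx

lemma zero_mem_ball : (0:ℝ) ∈ Metric.ball (0:ℝ) (9/10) := by
  norm_num [Metric.mem_ball]

lemma hasDerivAt_sum0 (hc : ∀ n, |c n| ≤ 6) {x : ℝ} (hx : x ∈ Metric.ball (0:ℝ) (9/10)) :
    HasDerivAt (fun y => ∑' n, t0 c n y) (∑' n, t1 c n x) x := by
  apply hasDerivAt_tsum_of_isPreconnected summable_u1 Metric.isOpen_ball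
    (convex_ball (0:ℝ) (9/10)).isPreconnected
    (fun n y _ => hasDerivAt_t0 n y)
    (fun n y hy => norm_t1_le hc (mem_ball_abs hy) n)
    zero_mem_ball
    (summable_t0 hc (by norm_num))
    hx

lemma hasDerivAt_sum1 (hc : ∀ n, |c n| ≤ 6) {x : ℝ} (hx : x ∈ Metric.ball (0:ℝ) (9/10)) :
    HasDerivAt (fun y => ∑' n, t1 c n y) (∑' n, t2 c n x) x := by
  apply hasDerivAt_tsum_of_isPreconnected summable_u2 Metric.isOpen_ball
    (convex_ball (0:ℝ) (9/10)).isPreconnected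
    (fun n y _ => hasDerivAt_t1 n y)
    (fun n y hy => norm_t2_le hc (mem_ball_abs hy) n)
    zero_mem_ball
    (summable_t1 hc (by norm_num))
    hx

lemma term_eq (n : ℕ) (x : ℝ) :
    ((2*(n:ℝ)+2)*(2*(n:ℝ)+1)*c (n+1) - (2*(n:ℝ))^2*c n) * x^(2*n)
      = t2 c (n+1) x - (x^2 * t2 c n x + x * t1 c n x) := by
  rcases n with _ | m
  · simp [t1, t2]; ring
  · unfold t1 t2
    rw [show 2*(m+1)-1-1 = 2*m from by omega, show 2*(m+1)-1 = 2*m+1 from by omega,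
        show 2*(m+1+1)-1-1 = 2*(m+1) from by omega, show 2*(m+1+1)-1 = 2*m+3 from by omega]
    push_cast
    ring

lemma series_ode (hc : ∀ n, |c n| ≤ 6) {x : ℝ} (hx : |x| ≤ 9/10) :
    (1-x^2) * (∑' n, t2 c n x) - x * (∑' n, t1 c n x)
      = ∑' n : ℕ, ((2*(n:ℝ)+2)*(2*(n:ℝ)+1)*c (n+1) - (2*(n:ℝ))^2*c n) * x^(2*n) := by
  have hS1 := summable_t1 hc hx
  have hS2 := summable_t2 hc hx
  have hshift : Summable (fun n => t2 c (n+1) x) := (summable_nat_add_iff 1).2 hS2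
  have h1 : Summable (fun n => x^2 * t2 c n x) := hS2.mul_left _
  have h2 : Summable (fun n => x * t1 c n x) := hS1.mul_left _
  have e0 : t2 c 0 x = 0 := by simp [t2]
  have key : ∑' n : ℕ, ((2*(n:ℝ)+2)*(2*(n:ℝ)+1)*c (n+1) - (2*(n:ℝ))^2*c n) * x^(2*n)
      = (∑' n, t2 c (n+1) x) - ((∑' n, x^2 * t2 c n x) + (∑' n, x * t1 c n x)) := by
    rw [← Summable.tsum_add h1 h2, ← Summable.tsum_sub hshift (h1.add h2)]
    exact tsum_congr (fun n => term_eq n x)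
  rw [key, tsum_mul_left, tsum_mul_left]
  have hz := Summable.tsum_eq_zero_add hS2
  rw [e0, zero_add] at hz
  rw [← hz]
  ring


lemma ode_b {x : ℝ} (hx : |x| ≤ 9/10) :
    (1-x^2)*(∑' n, t2 b n x) - x*(∑' n, t1 b n x) = 2 := by
  rw [series_ode b_le hx]
  have key : ∀ n : ℕ, ((2*(n:ℝ)+2)*(2*(n:ℝ)+1)*b (n+1) - (2*(n:ℝ))^2*b n) * x^(2*n)
      = (if n = 0 then (2:ℝ) else 0) * x^(2*n) := by
    intro n
    have h := b_rec n
    have : (2*(n:ℝ)+2)*(2*(n:ℝ)+1)*b (n+1) - (2*(n:ℝ))^2*b n = (if n = 0 then (2:ℝ) else 0) := by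
      rcases eq_or_ne n 0 with h0 | h0
      · rw [if_pos h0]; rw [if_pos h0] at h; linarith
      · rw [if_neg h0]; rw [if_neg h0] at h; linarith
    rw [this]
  rw [tsum_congr key, tsum_eq_single 0 (fun n hn => by simp [if_neg hn])]
  simp [ContinuousLinearMap.ext_iff]

lemma ode_a {x : ℝ} (hx : |x| ≤ 9/10) :
    (1-x^2)*(∑' n, t2 a n x) - x*(∑' n, t1 a n x) = 12 * (∑' n, t0 b n x) := by
  rw [series_ode a_le hx, ← tsum_mul_left]
  refine tsum_congr fun n => ?_
  have h := a_rec n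
  unfold t0
  have : (2*(n:ℝ)+2)*(2*(n:ℝ)+1)*a (n+1) - (2*(n:ℝ))^2*a n = 12 * b n := by linarith
  rw [this]
  ring

lemma const_on_ball {f : ℝ → ℝ} (h : ∀ x ∈ Metric.ball (0:ℝ) (9/10), HasDerivAt f 0 x)
    {x : ℝ} (hx : x ∈ Metric.ball (0:ℝ) (9/10)) : f x = f 0 := by
  apply (convex_ball (0:ℝ) (9/10)).is_const_of_fderivWithin_eq_zero (𝕜 := ℝ)
    (fun y hy => ((h y hy).differentiableAt).differentiableWithinAt) ?_ hx zero_mem_ball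
  intro y hy
  rw [fderivWithin_of_isOpen Metric.isOpen_ball hy, (h y hy).hasFDerivAt.fderiv]
  apply ContinuousLinearMap.ext
  intro z
  simp

section ballfacts
variable {x : ℝ} (hx : x ∈ Metric.ball (0:ℝ) (9/10))
include hx

lemma one_sub_sq_pos : 0 < 1 - x^2 := by
  have h := mem_ball_abs hx
  nlinarith [abs_nonneg x, sq_abs x]

lemma sqrt_pos' : 0 < sqrt (1 - x^2) := Real.sqrt_pos.2 (one_sub_sq_pos hx)

lemma x_ne_one : x ≠ 1 := by
  have h := mem_ball_abs hx
  intro h1; rw [h1] at h; norm_num at h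

lemma x_ne_neg_one : x ≠ -1 := by
  have h := mem_ball_abs hx
  intro h1; rw [h1] at h; norm_num at h

lemma hasDerivAt_sqrt1 : HasDerivAt (fun y => sqrt (1 - y^2)) (-x / sqrt (1-x^2)) x := by
  have inner : HasDerivAt (fun y : ℝ => 1 - y^2) (-(2*x)) x := by
    simpa using ((hasDerivAt_pow 2 x).const_sub 1)
  have h := inner.sqrt (ne_of_gt (one_sub_sq_pos hx))
  convert h using 1
  have hs := sqrt_pos' hx
  field_simp

end ballfacts

lemma t1_zero (c : ℕ → ℝ) : (∑' n, t1 c n 0) = 0 := by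
  have : ∀ n : ℕ, t1 c n 0 = 0 := by
    intro n
    rcases n with _ | m
    · simp [t1]
    · simp [t1, zero_pow, show 2*(m+1)-1 = 2*m+1 from by omega]
  rw [tsum_congr this, tsum_zero]

lemma g1_b_eq {x : ℝ} (hx : x ∈ Metric.ball (0:ℝ) (9/10)) :
    sqrt (1-x^2) * (∑' n, t1 b n x) = 2 * arcsin x := by
  have key : ∀ y ∈ Metric.ball (0:ℝ) (9/10),
      HasDerivAt (fun z => sqrt (1-z^2) * (∑' n, t1 b n z) - 2 * arcsin z) 0 y := by
    intro y hy
    have h1y := one_sub_sq_pos hy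
    have hsy := sqrt_pos' hy
    have hd : HasDerivAt (fun z => sqrt (1-z^2) * (∑' n, t1 b n z) - 2 * arcsin z)
        ((-y/sqrt (1-y^2)) * (∑' n, t1 b n y) + sqrt (1-y^2) * (∑' n, t2 b n y)
          - 2 * (1/sqrt (1-y^2))) y :=
      ((hasDerivAt_sqrt1 hy).mul (hasDerivAt_sum1 b_le hy)).sub
        ((Real.hasDerivAt_arcsin (x_ne_neg_one hy) (x_ne_one hy)).const_mul 2)
    convert hd using 1
    have hode := ode_b (mem_ball_abs hy)
    have hss : sqrt (1-y^2) * sqrt (1-y^2) = 1-y^2 := Real.mul_self_sqrt h1y.le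
    rw [eq_comm]
    have e2 : sqrt (1-y^2) * (∑' n, t2 b n y) = ((1-y^2) * (∑' n, t2 b n y))/sqrt (1-y^2) := by
      rw [eq_div_iff hsy.ne']
      linear_combination (∑' n, t2 b n y) * hss
    rw [e2]
    have e3 : -y / sqrt (1-y^2) * (∑' n, t1 b n y) + ((1-y^2) * (∑' n, t2 b n y))/sqrt (1-y^2)
        - 2*(1/sqrt (1-y^2))
        = ((-(y * (∑' n, t1 b n y)) + (1-y^2) * (∑' n, t2 b n y)) - 2)/sqrt (1-y^2) := by
      ring
    rw [e3]
    have hz : (-(y * (∑' n, t1 b n y)) + (1-y^2) * (∑' n, t2 b n y)) - 2 = 0 := by linarith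
    rw [hz, zero_div]
  have h0 := const_on_ball key hx
  simp only [t1_zero, mul_zero, Real.arcsin_zero, sub_zero, zero_sub, mul_zero, sub_zero] at h0
  linarith [h0]

lemma b_zero : b 0 = 0 := by simp [b]
lemma a_zero : a 0 = 0 := by simp [a]

lemma t0_zero {c : ℕ → ℝ} (hc0 : c 0 = 0) : (∑' n, t0 c n 0) = 0 := by
  have : ∀ n : ℕ, t0 c n 0 = 0 := by
    intro n
    rcases n with _ | m
    · simp [t0, hc0]
    · simp [t0, zero_pow, show 2*(m+1) ≠ 0 from by omega]
  rw [tsum_congr this, tsum_zero]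

lemma g_b_eq {x : ℝ} (hx : x ∈ Metric.ball (0:ℝ) (9/10)) :
    (∑' n, t0 b n x) = arcsin x ^ 2 := by
  have key : ∀ y ∈ Metric.ball (0:ℝ) (9/10),
      HasDerivAt (fun z => (∑' n, t0 b n z) - arcsin z ^ 2) 0 y := by
    intro y hy
    have h1y := one_sub_sq_pos hy
    have hsy := sqrt_pos' hy
    have hd : HasDerivAt (fun z => (∑' n, t0 b n z) - arcsin z ^ 2)
        ((∑' n, t1 b n y) - (2:ℕ) * arcsin y ^ (2-1) * (1/sqrt (1-y^2))) y :=
      (hasDerivAt_sum0 b_le hy).sub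
        ((Real.hasDerivAt_arcsin (x_ne_neg_one hy) (x_ne_one hy)).pow 2)
    convert hd using 1
    have hA : (∑' n, t1 b n y) = (2 * arcsin y)/sqrt (1-y^2) := by
      rw [eq_div_iff hsy.ne']
      linear_combination g1_b_eq hy
    rw [hA]
    push_cast
    ring
  have h0 := const_on_ball key hx
  simp only [t0_zero b_zero, Real.arcsin_zero, sub_zero, zero_sub] at h0
  have h2 : arcsin (0:ℝ) ^ 2 = 0 := by simp
  nlinarith [h0, h2]

lemma g1_a_eq {x : ℝ} (hx : x ∈ Metric.ball (0:ℝ) (9/10)) :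
    sqrt (1-x^2) * (∑' n, t1 a n x) = 4 * arcsin x ^ 3 := by
  have key : ∀ y ∈ Metric.ball (0:ℝ) (9/10),
      HasDerivAt (fun z => sqrt (1-z^2) * (∑' n, t1 a n z) - 4 * arcsin z ^ 3) 0 y := by
    intro y hy
    have h1y := one_sub_sq_pos hy
    have hsy := sqrt_pos' hy
    have hss : sqrt (1-y^2) * sqrt (1-y^2) = 1-y^2 := Real.mul_self_sqrt h1y.le
    have hd : HasDerivAt (fun z => sqrt (1-z^2) * (∑' n, t1 a n z) - 4 * arcsin z ^ 3)
        ((-y/sqrt (1-y^2)) * (∑' n, t1 a n y) + sqrt (1-y^2) * (∑' n, t2 a n y)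
          - 4 * ((3:ℕ) * arcsin y ^ (3-1) * (1/sqrt (1-y^2)))) y :=
      ((hasDerivAt_sqrt1 hy).mul (hasDerivAt_sum1 a_le hy)).sub
        (((Real.hasDerivAt_arcsin (x_ne_neg_one hy) (x_ne_one hy)).pow 3).const_mul 4)
    convert hd using 1
    have hode := ode_a (mem_ball_abs hy)
    rw [g_b_eq hy] at hode
    rw [eq_comm]
    have e2 : sqrt (1-y^2) * (∑' n, t2 a n y) = ((1-y^2) * (∑' n, t2 a n y))/sqrt (1-y^2) := by
      rw [eq_div_iff hsy.ne']
      linear_combination (∑' n, t2 a n y) * hss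
    rw [e2]
    have e3 : -y / sqrt (1-y^2) * (∑' n, t1 a n y) + ((1-y^2) * (∑' n, t2 a n y))/sqrt (1-y^2)
        - 4*(((3:ℕ):ℝ) * arcsin y ^ (3-1) * (1/sqrt (1-y^2)))
        = ((-(y * (∑' n, t1 a n y)) + (1-y^2) * (∑' n, t2 a n y)) - 12 * arcsin y ^ 2)/sqrt (1-y^2) := by
      push_cast
      ring
    rw [e3]
    have hz : (-(y * (∑' n, t1 a n y)) + (1-y^2) * (∑' n, t2 a n y)) - 12 * arcsin y ^ 2 = 0 := by
      linarith
    rw [hz, zero_div]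
  have h0 := const_on_ball key hx
  simp only [t1_zero, mul_zero, Real.arcsin_zero, sub_zero, zero_sub] at h0
  have h2 : (4:ℝ) * arcsin (0:ℝ) ^ 3 = 0 := by simp
  nlinarith [h0, h2]

lemma g_a_eq {x : ℝ} (hx : x ∈ Metric.ball (0:ℝ) (9/10)) :
    (∑' n, t0 a n x) = arcsin x ^ 4 := by
  have key : ∀ y ∈ Metric.ball (0:ℝ) (9/10),
      HasDerivAt (fun z => (∑' n, t0 a n z) - arcsin z ^ 4) 0 y := by
    intro y hy
    have h1y := one_sub_sq_pos hy
    have hsy := sqrt_pos' hy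
    have hd : HasDerivAt (fun z => (∑' n, t0 a n z) - arcsin z ^ 4)
        ((∑' n, t1 a n y) - (4:ℕ) * arcsin y ^ (4-1) * (1/sqrt (1-y^2))) y :=
      (hasDerivAt_sum0 a_le hy).sub
        ((Real.hasDerivAt_arcsin (x_ne_neg_one hy) (x_ne_one hy)).pow 4)
    convert hd using 1
    have hA : (∑' n, t1 a n y) = (4 * arcsin y ^ 3)/sqrt (1-y^2) := by
      rw [eq_div_iff hsy.ne']
      linear_combination g1_a_eq hy
    rw [hA]
    push_cast
    ring
  have h0 := const_on_ball key hx
  simp only [t0_zero a_zero, Real.arcsin_zero, sub_zero, zero_sub] at h0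
  have h2 : arcsin (0:ℝ) ^ 4 = 0 := by simp
  nlinarith [h0, h2]

lemma sqrt3_lt : sqrt 3 / 2 < 9/10 := by
  have h : sqrt 3 < 9/5 := by
    rw [show (9:ℝ)/5 = sqrt ((9/5)^2) from (Real.sqrt_sq (by norm_num)).symm]
    apply Real.sqrt_lt_sqrt (by norm_num)
    norm_num
  linarith

lemma sqrt3_nonneg : (0:ℝ) ≤ sqrt 3 / 2 := by positivity

lemma x0_mem : (sqrt 3/2) ∈ Metric.ball (0:ℝ) (9/10) := by
  rw [Metric.mem_ball, Real.dist_eq, sub_zero, abs_of_nonneg sqrt3_nonneg]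
  exact sqrt3_lt

lemma x0_abs : |sqrt 3/2| ≤ 9/10 := by
  rw [abs_of_nonneg sqrt3_nonneg]; exact le_of_lt sqrt3_lt

lemma arcsin_x0 : arcsin (sqrt 3/2) = π/3 := by
  rw [show sqrt 3/2 = Real.sin (π/3) from (Real.sin_pi_div_three).symm]
  exact Real.arcsin_sin (by linarith [pi_pos]) (by linarith [pi_pos])

lemma term_final (i : ℕ) :
    (3:ℝ)^(i+1) * ((∑ j ∈ Finset.range (i+1), (1:ℝ)/((j:ℝ)+1)^2) - 1/((i:ℝ)+1)^2) /
        (((i:ℝ)+1)^2 * ((Nat.choose (2*(i+1)) (i+1)) : ℝ))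
      = (2/3) * t0 a (i+1) (sqrt 3/2) := by
  have hH : (∑ j ∈ Finset.range (i+1), (1:ℝ)/((j:ℝ)+1)^2) - 1/((i:ℝ)+1)^2 = H2 i := by
    have h := H2_succ i
    have hdef : H2 (i+1) = ∑ j ∈ Finset.range (i+1), (1:ℝ)/((j:ℝ)+1)^2 := rfl
    rw [← hdef]
    linarith
  rw [hH]
  have hx2 : ((sqrt 3/2:ℝ))^(2*(i+1)) = (3/4)^(i+1) := by
    rw [pow_mul]
    congr 1
    rw [div_pow, Real.sq_sqrt (by norm_num : (0:ℝ) ≤ 3)]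
    norm_num
  unfold t0 a
  rw [hx2, Nat.add_sub_cancel]
  have hcb := cb_pos (i+1)
  have hcb' : ((Nat.choose (2*(i+1)) (i+1)):ℝ) = cb (i+1) := rfl
  rw [hcb']
  have hi : ((i:ℝ)+1) ≠ 0 := by positivity
  have hcast : (((i+1 : ℕ)):ℝ) = (i:ℝ)+1 := by push_cast; ring
  rw [hcast]
  have hp : (4:ℝ)^(i+1)*(3/4)^(i+1) = 3^(i+1) := by rw [← mul_pow]; norm_num
  rw [← hp]
  field_simp

set_option maxHeartbeats 1000000 in
theorem result : (∑' i : ℕ, (3:ℝ)^(i+1) * ((∑ j ∈ Finset.range (i+1), (1:ℝ)/((j:ℝ)+1)^2) - 1/((i:ℝ)+1)^2) / (((i:ℝ)+1)^2 * ((Nat.choose (2*(i+1)) (i+1)) : ℝ))) = 2 * Real.pi^4 / 243 := by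
  have htsum : (∑' n, t0 a n (sqrt 3/2)) = π^4/81 := by
    rw [g_a_eq x0_mem, arcsin_x0, div_pow]
    norm_num
  have hs : HasSum (fun n => t0 a n (sqrt 3/2)) (π^4/81) := by
    have h := (summable_t0 a_le x0_abs).hasSum
    rwa [htsum] at h
  have h1 : HasSum (fun n => t0 a (n+1) (sqrt 3/2)) (π^4/81) := by
    refine (hasSum_nat_add_iff (f := fun n => t0 a n (sqrt 3/2)) 1).2 ?_
    simpa [t0, a_zero] using hs
  have h2 : HasSum (fun i => (2/3:ℝ) * t0 a (i+1) (sqrt 3/2)) ((2/3)*(π^4/81)) :=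
    h1.mul_left _
  rw [tsum_congr term_final, h2.tsum_eq]
  ring

end
end S17

theorem stmt_17 : (∑' i : ℕ, (3:ℝ)^(i+1) * ((∑ j ∈ Finset.range (i+1), (1:ℝ)/((j:ℝ)+1)^2) - 1/((i:ℝ)+1)^2) / (((i:ℝ)+1)^2 * ((Nat.choose (2*(i+1)) (i+1)) : ℝ))) = 2 * Real.pi^4 / 243 := S17.result
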